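/- Under Independence and Monotonicity, for each wave w the reduced form decomposes as a weighted average of incremental complier effects: ρ_w = Σ_{t=1}^{w} c_{w,t} · π_{w,t}, where c_{w,t} = E[Y_w(t) − Y_w(t−1) | T_w(1) ≥ t > T_w(0)] whenever π_{w,t} > 0, and the t-th term is zero whenever π_{w,t} = 0. -/

import Mathlib

open MeasureTheory ProbabilityTheory Finset

/-- Conditional mean `E[X | A]`: the expectation of `X` under `P` conditioned on the event `A`. -/
noncomputable def cmean {Ω : Type*} [MeasurableSpace Ω] (P : MeasureTheory.Measure Ω)
    (A : Set Ω) (X : Ω → ℝ) : ℝ :=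
  ∫ ω, X ω ∂(P[|A])

lemma tele_sum (f : ℕ → ℝ) : ∀ b a : ℕ, a ≤ b →
    ∑ t ∈ Finset.Icc (a + 1) b, (f t - f (t - 1)) = f b - f a := by
  intro b
  induction b with
  | zero => intro a ha; interval_cases a; simp
  | succ b ih =>
    intro a ha
    rcases eq_or_lt_of_le ha with h | h
    · rw [← h]
      rw [Finset.Icc_eq_empty (by omega)]
      simp
    · have ha' : a ≤ b := Nat.lt_succ_iff.mp h
      rw [Finset.sum_Icc_succ_top (Nat.succ_le_succ ha'), ih a ha']
      simp only [Nat.add_sub_cancel]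
      ring

lemma cmean_mul_toReal {Ω : Type*} [MeasurableSpace Ω] (P : MeasureTheory.Measure Ω)
    [IsProbabilityMeasure P] (A : Set Ω) (X : Ω → ℝ) :
    cmean P A X * (P A).toReal = ∫ ω in A, X ω ∂P := by
  unfold cmean
  rw [ProbabilityTheory.cond, integral_smul_measure]
  by_cases hA : P A = 0
  · rw [Measure.restrict_eq_zero.mpr hA]
    simp [hA]
  · have hfin : P A ≠ ⊤ := measure_ne_top P A
    have htr : (P A).toReal ≠ 0 := ENNReal.toReal_ne_zero.mpr ⟨hA, hfin⟩
    rw [ENNReal.toReal_inv]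
    simp only [smul_eq_mul]
    field_simp

theorem reduced_form_decomposition
    {Ω : Type*} [MeasurableSpace Ω] (P : MeasureTheory.Measure Ω) [IsProbabilityMeasure P]
    (Z : Ω → ℕ) (hZmeas : Measurable Z) (hZbin : ∀ ω, Z ω ≤ 1)
    (hZpos : 0 < P {ω | Z ω = 1}) (hZlt : P {ω | Z ω = 1} < 1)
    (wbar : ℕ) (hwbar : 1 ≤ wbar)
    (T : ℕ → ℕ → Ω → ℕ) (hTmeas : ∀ w z, Measurable (T w z))
    (hTrange : ∀ w ∈ Set.Icc 1 wbar, ∀ z ≤ 1, ∀ ω, T w z ω ≤ w)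
    (Y : ℕ → ℕ → Ω → ℝ) (hYmeas : ∀ w t, Measurable (Y w t))
    (hYint : ∀ w ∈ Set.Icc 1 wbar, ∀ t ≤ w, MeasureTheory.Integrable (Y w t) P)
    (hIndep : ∀ w ∈ Set.Icc 1 wbar,
      IndepFun (fun ω => ((fun t : ℕ => Y w t ω), T w 1 ω, T w 0 ω)) Z P)
    (hMono : ∀ w ∈ Set.Icc 1 wbar, ∀ᵐ ω ∂P, T w 0 ω ≤ T w 1 ω) :
    ∀ w ∈ Set.Icc 1 wbar,
      cmean P {ω | Z ω = 1} (fun ω => Y w (T w (Z ω) ω) ω)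
        - cmean P {ω | Z ω = 0} (fun ω => Y w (T w (Z ω) ω) ω)
      = ∑ t ∈ Finset.Icc 1 w,
          cmean P {ω | T w 0 ω < t ∧ t ≤ T w 1 ω} (fun ω => Y w t ω - Y w (t - 1) ω)
            * (P {ω | T w 0 ω < t ∧ t ≤ T w 1 ω}).toReal := by
  intro w hw
  obtain ⟨hw1, hw2⟩ := hw
  -- representation of ω ↦ Y w (T w z ω) ω as a finite sum of indicators
  have hrep : ∀ z ≤ 1, (fun ω => Y w (T w z ω) ω)
      = fun ω => ∑ t ∈ Finset.range (w + 1),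
          Set.indicator {ω' | T w z ω' = t} (Y w t) ω := by
    intro z hz
    funext ω
    rw [Finset.sum_eq_single (T w z ω)]
    · simp [Set.indicator]
    · intro t _ ht
      exact Set.indicator_of_notMem (fun h => ht (h.symm)) _
    · intro h
      exact absurd (Finset.mem_range.mpr
        (Nat.lt_succ_of_le (hTrange w ⟨hw1, hw2⟩ z hz ω))) h
  have hint : ∀ z ≤ 1, Integrable (fun ω => Y w (T w z ω) ω) P := by
    intro z hz
    rw [hrep z hz]
    refine integrable_finset_sum _ fun t ht => ?_
    exact (hYint w ⟨hw1, hw2⟩ t (Nat.lt_succ_iff.mp (Finset.mem_range.mp ht))).indicator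
      (hTmeas w z (measurableSet_singleton t))
  have hmeas : ∀ z ≤ 1, Measurable (fun ω => Y w (T w z ω) ω) := by
    intro z hz
    rw [hrep z hz]
    exact Finset.measurable_sum _ fun t _ =>
      (hYmeas w t).indicator (hTmeas w z (measurableSet_singleton t))
  -- independence of ω ↦ Y w (T w z ω) ω from Z
  have heval : Measurable (fun p : (ℕ → ℝ) × ℕ => p.1 p.2) :=
    measurable_from_prod_countable_left fun n => measurable_pi_apply n
  have hindep : ∀ z ≤ 1, IndepFun (fun ω => Y w (T w z ω) ω) Z P := by
    intro z hz
    interval_cases z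
    · exact (hIndep w ⟨hw1, hw2⟩).comp
        (heval.comp (measurable_fst.prodMk (measurable_snd.comp measurable_snd)))
        measurable_id
    · exact (hIndep w ⟨hw1, hw2⟩).comp
        (heval.comp (measurable_fst.prodMk (measurable_fst.comp measurable_snd)))
        measurable_id
  -- conditional mean on {Z = z} equals unconditional mean
  have key : ∀ z ≤ 1, P {ω | Z ω = z} ≠ 0 →
      cmean P {ω | Z ω = z} (fun ω => Y w (T w (Z ω) ω) ω)
        = ∫ ω, Y w (T w z ω) ω ∂P := by
    intro z hz hne
    have hA : MeasurableSet {ω | Z ω = z} := hZmeas (measurableSet_singleton z)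
    have hfin : P {ω | Z ω = z} ≠ ⊤ := measure_ne_top _ _
    have htr : (P {ω | Z ω = z}).toReal ≠ 0 := ENNReal.toReal_ne_zero.mpr ⟨hne, hfin⟩
    have hcongr : cmean P {ω | Z ω = z} (fun ω => Y w (T w (Z ω) ω) ω)
        = cmean P {ω | Z ω = z} (fun ω => Y w (T w z ω) ω) := by
      unfold cmean
      rw [ProbabilityTheory.cond, integral_smul_measure, integral_smul_measure]
      congr 1
      refine integral_congr_ae ?_
      filter_upwards [ae_restrict_mem hA] with ω hω
      rw [show Z ω = z from hω]
    rw [hcongr]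
    -- use independence
    have hψ : Measurable (fun n : ℕ => if n = z then (1 : ℝ) else 0) :=
      measurable_from_top
    have hI : IndepFun (fun ω => Y w (T w z ω) ω)
        (fun ω => if Z ω = z then (1 : ℝ) else 0) P :=
      (hindep z hz).comp measurable_id hψ
    have hmul := hI.integral_mul_eq_mul_integral (hmeas z hz).aestronglyMeasurable
      ((hψ.comp hZmeas).aestronglyMeasurable)
    have hsetint : ∫ ω in {ω | Z ω = z}, Y w (T w z ω) ω ∂P
        = ∫ ω, Y w (T w z ω) ω * (if Z ω = z then (1 : ℝ) else 0) ∂P := by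
      rw [← integral_indicator hA]
      refine integral_congr_ae (Filter.Eventually.of_forall fun ω => ?_)
      by_cases hω : Z ω = z <;>
        simp [Set.indicator_apply, Set.mem_setOf_eq, hω]
    have hind1 : ∫ ω, (if Z ω = z then (1 : ℝ) else 0) ∂P
        = (P {ω | Z ω = z}).toReal := by
      rw [← measureReal_def, ← integral_indicator_one hA]
      refine integral_congr_ae (Filter.Eventually.of_forall fun ω => ?_)
      by_cases hω : Z ω = z <;>
        simp [Set.indicator_apply, Set.mem_setOf_eq, hω]
    have h2 : cmean P {ω | Z ω = z} (fun ω => Y w (T w z ω) ω)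
        * (P {ω | Z ω = z}).toReal
        = (∫ ω, Y w (T w z ω) ω ∂P) * (P {ω | Z ω = z}).toReal := by
      rw [cmean_mul_toReal, hsetint]
      rw [hind1] at hmul
      exact hmul
    exact mul_right_cancel₀ htr h2
  have hA1ne : P {ω | Z ω = 1} ≠ 0 := hZpos.ne'
  have hA0ne : P {ω | Z ω = 0} ≠ 0 := by
    have hA1 : MeasurableSet {ω | Z ω = 1} := hZmeas (measurableSet_singleton 1)
    have hc : {ω | Z ω = 0} = {ω | Z ω = 1}ᶜ := by
      ext ω
      have := hZbin ω
      simp only [Set.mem_setOf_eq, Set.mem_compl_iff]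
      omega
    rw [hc, measure_compl hA1 (measure_ne_top _ _)]
    simp only [measure_univ]
    rw [Ne, tsub_eq_zero_iff_le]
    exact not_le.mpr hZlt
  rw [key 1 le_rfl hA1ne, key 0 (by norm_num) hA0ne]
  -- measurability of complier events
  have hC : ∀ t : ℕ, MeasurableSet {ω | T w 0 ω < t ∧ t ≤ T w 1 ω} := fun t =>
    ((hTmeas w 0) measurableSet_Iio).inter ((hTmeas w 1) measurableSet_Ici)
  -- the telescoping a.e. identity
  have hae : ∀ᵐ ω ∂P, Y w (T w 1 ω) ω - Y w (T w 0 ω) ω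
      = ∑ t ∈ Finset.Icc 1 w,
          Set.indicator {ω' | T w 0 ω' < t ∧ t ≤ T w 1 ω'}
            (fun ω' => Y w t ω' - Y w (t - 1) ω') ω := by
    filter_upwards [hMono w ⟨hw1, hw2⟩] with ω hm
    have h1 : T w 1 ω ≤ w := hTrange w ⟨hw1, hw2⟩ 1 le_rfl ω
    have hsum : ∑ t ∈ Finset.Icc 1 w,
        Set.indicator {ω' | T w 0 ω' < t ∧ t ≤ T w 1 ω'}
          (fun ω' => Y w t ω' - Y w (t - 1) ω') ω
        = ∑ t ∈ Finset.Icc (T w 0 ω + 1) (T w 1 ω), (Y w t ω - Y w (t - 1) ω) := by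
      simp only [Set.indicator_apply, Set.mem_setOf_eq]
      rw [Finset.sum_ite, Finset.sum_const_zero, add_zero]
      congr 1
      ext t
      simp only [Finset.mem_filter, Finset.mem_Icc]
      omega
    rw [hsum, tele_sum (fun t => Y w t ω) _ _ hm]
  have hintC : ∀ t ∈ Finset.Icc 1 w,
      Integrable (Set.indicator {ω' | T w 0 ω' < t ∧ t ≤ T w 1 ω'}
        (fun ω' => Y w t ω' - Y w (t - 1) ω')) P := by
    intro t ht
    obtain ⟨ht1, ht2⟩ := Finset.mem_Icc.mp ht
    exact ((hYint w ⟨hw1, hw2⟩ t ht2).sub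
      (hYint w ⟨hw1, hw2⟩ (t - 1) (by omega))).indicator (hC t)
  calc (∫ ω, Y w (T w 1 ω) ω ∂P) - ∫ ω, Y w (T w 0 ω) ω ∂P
      = ∫ ω, (Y w (T w 1 ω) ω - Y w (T w 0 ω) ω) ∂P := by
        rw [integral_sub (hint 1 le_rfl) (hint 0 (by norm_num))]
    _ = ∫ ω, (∑ t ∈ Finset.Icc 1 w,
          Set.indicator {ω' | T w 0 ω' < t ∧ t ≤ T w 1 ω'}
            (fun ω' => Y w t ω' - Y w (t - 1) ω') ω) ∂P := integral_congr_ae hae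
    _ = ∑ t ∈ Finset.Icc 1 w, ∫ ω, Set.indicator {ω' | T w 0 ω' < t ∧ t ≤ T w 1 ω'}
            (fun ω' => Y w t ω' - Y w (t - 1) ω') ω ∂P := integral_finset_sum _ hintC
    _ = ∑ t ∈ Finset.Icc 1 w,
          cmean P {ω | T w 0 ω < t ∧ t ≤ T w 1 ω} (fun ω => Y w t ω - Y w (t - 1) ω)
            * (P {ω | T w 0 ω < t ∧ t ≤ T w 1 ω}).toReal := by
        refine Finset.sum_congr rfl fun t _ => ?_
        rw [cmean_mul_toReal, integral_indicator (hC t)]
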